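/- For probability measures P and Q on ℝ with finite second moments, means μ_P, μ_Q and variances σ_P², σ_Q², the Wasserstein-2 distance satisfies W₂(P, Q)² ≥ (μ_P − μ_Q)² + (σ_P − σ_Q)². -/
import Mathlib

open MeasureTheory ENNReal

/-- Squared Wasserstein-2 distance on `ℝ`: infimum over couplings of the
expected squared difference. -/
noncomputable def W2sq (P Q : MeasureTheory.Measure ℝ) : ℝ≥0∞ :=
  ⨅ (π : MeasureTheory.Measure (ℝ × ℝ)) (_ : π.map Prod.fst = P) (_ : π.map Prod.snd = Q),
    ∫⁻ p, ENNReal.ofReal ((p.1 - p.2) ^ 2) ∂π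

private lemma integral_mul_eq_zero_of_sq {α : Type*} [MeasurableSpace α] {μ : Measure α}
    (f g : α → ℝ) (hf2 : Integrable (fun x => (f x) ^ 2) μ)
    (h : ∫ x, (f x) ^ 2 ∂μ = 0) : ∫ x, f x * g x ∂μ = 0 := by
  have hf0 : (fun x => (f x) ^ 2) =ᵐ[μ] 0 :=
    (integral_eq_zero_iff_of_nonneg (fun x => sq_nonneg _) hf2).1 h
  have h0 : (fun x => f x * g x) =ᵐ[μ] 0 := by
    filter_upwards [hf0] with x hx
    have hfx : f x = 0 := pow_eq_zero_iff (n := 2) (by norm_num) |>.1 hx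
    simp [hfx]
  rw [integral_congr_ae h0]
  simp

theorem scalar_gelbrich (P Q : Measure ℝ) [IsProbabilityMeasure P] [IsProbabilityMeasure Q]
    (hP2 : Integrable (fun x => x ^ 2) P) (hQ2 : Integrable (fun x => x ^ 2) Q)
    (μP μQ σP σQ : ℝ) (hσP : 0 ≤ σP) (hσQ : 0 ≤ σQ)
    (hμP : μP = ∫ x, x ∂P) (hμQ : μQ = ∫ x, x ∂Q)
    (hvP : σP ^ 2 = ∫ x, (x - μP) ^ 2 ∂P) (hvQ : σQ ^ 2 = ∫ x, (x - μQ) ^ 2 ∂Q) :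
    ENNReal.ofReal ((μP - μQ) ^ 2 + (σP - σQ) ^ 2) ≤ W2sq P Q := by
  rw [W2sq]
  refine le_iInf fun π => le_iInf fun hfst => le_iInf fun hsnd => ?_
  by_cases htop : (∫⁻ p, ENNReal.ofReal ((p.1 - p.2) ^ 2) ∂π) = ⊤
  · rw [htop]; exact le_top
  -- integrability of x wrt P, Q
  have habs : ∀ x : ℝ, |x| ≤ 1 + x ^ 2 := by
    intro x; nlinarith [sq_nonneg (|x| - 1), sq_abs x, abs_nonneg x]
  have hP1 : Integrable (fun x : ℝ => x) P := by
    refine ((integrable_const 1).add hP2).mono' measurable_id.aestronglyMeasurable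
      (ae_of_all _ fun x => ?_)
    simpa [Real.norm_eq_abs] using habs x
  have hQ1 : Integrable (fun x : ℝ => x) Q := by
    refine ((integrable_const 1).add hQ2).mono' measurable_id.aestronglyMeasurable
      (ae_of_all _ fun x => ?_)
    simpa [Real.norm_eq_abs] using habs x
  -- transfer to π
  have hPmap : P = π.map Prod.fst := hfst.symm
  have hQmap : Q = π.map Prod.snd := hsnd.symm
  have hX2 : Integrable (fun p : ℝ × ℝ => p.1 ^ 2) π := by
    rw [hPmap] at hP2
    exact (integrable_map_measure (measurable_id.pow_const 2).aestronglyMeasurable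
      measurable_fst.aemeasurable).1 hP2
  have hY2 : Integrable (fun p : ℝ × ℝ => p.2 ^ 2) π := by
    rw [hQmap] at hQ2
    exact (integrable_map_measure (measurable_id.pow_const 2).aestronglyMeasurable
      measurable_snd.aemeasurable).1 hQ2
  have hX1 : Integrable (fun p : ℝ × ℝ => p.1) π := by
    rw [hPmap] at hP1
    exact (integrable_map_measure measurable_id.aestronglyMeasurable
      measurable_fst.aemeasurable).1 hP1
  have hY1 : Integrable (fun p : ℝ × ℝ => p.2) π := by
    rw [hQmap] at hQ1
    exact (integrable_map_measure measurable_id.aestronglyMeasurable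
      measurable_snd.aemeasurable).1 hQ1
  have hprob : IsProbabilityMeasure π := by
    constructor
    have h1 : π.map Prod.fst Set.univ = 1 := by rw [hfst]; simp
    rwa [Measure.map_apply measurable_fst MeasurableSet.univ, Set.preimage_univ] at h1
  -- centered functions
  have ha2 : Integrable (fun p : ℝ × ℝ => (p.1 - μP) ^ 2) π := by
    have h : Integrable (fun p : ℝ × ℝ => p.1 ^ 2 - 2 * μP * p.1 + μP ^ 2) π :=
      (hX2.sub (hX1.const_mul (2 * μP))).add (integrable_const (μP ^ 2))
    exact h.congr (ae_of_all _ fun p => by ring)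
  have hb2 : Integrable (fun p : ℝ × ℝ => (p.2 - μQ) ^ 2) π := by
    have h : Integrable (fun p : ℝ × ℝ => p.2 ^ 2 - 2 * μQ * p.2 + μQ ^ 2) π :=
      (hY2.sub (hY1.const_mul (2 * μQ))).add (integrable_const (μQ ^ 2))
    exact h.congr (ae_of_all _ fun p => by ring)
  have ha1 : Integrable (fun p : ℝ × ℝ => p.1 - μP) π := hX1.sub (integrable_const μP)
  have hb1 : Integrable (fun p : ℝ × ℝ => p.2 - μQ) π := hY1.sub (integrable_const μQ)
  have hab : Integrable (fun p : ℝ × ℝ => (p.1 - μP) * (p.2 - μQ)) π := by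
    have h : Integrable (fun p : ℝ × ℝ => (p.1 - μP) ^ 2 + (p.2 - μQ) ^ 2) π := ha2.add hb2
    refine h.mono'
      (((measurable_fst.sub_const μP).mul (measurable_snd.sub_const μQ)).aestronglyMeasurable)
      (ae_of_all _ fun p => ?_)
    rw [Real.norm_eq_abs, abs_mul]
    nlinarith [sq_nonneg (|p.1 - μP| - |p.2 - μQ|), sq_abs (p.1 - μP), sq_abs (p.2 - μQ),
      abs_nonneg (p.1 - μP), abs_nonneg (p.2 - μQ)]
  -- integrals of centered functions
  have hEa2 : ∫ p : ℝ × ℝ, (p.1 - μP) ^ 2 ∂π = σP ^ 2 := by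
    rw [hvP, hPmap]
    exact (integral_map measurable_fst.aemeasurable
      (f := fun x : ℝ => (x - μP) ^ 2)
      ((measurable_id.sub_const μP).pow_const 2).aestronglyMeasurable).symm
  have hEb2 : ∫ p : ℝ × ℝ, (p.2 - μQ) ^ 2 ∂π = σQ ^ 2 := by
    rw [hvQ, hQmap]
    exact (integral_map measurable_snd.aemeasurable
      (f := fun x : ℝ => (x - μQ) ^ 2)
      ((measurable_id.sub_const μQ).pow_const 2).aestronglyMeasurable).symm
  have hEX : ∫ p : ℝ × ℝ, p.1 ∂π = μP := by
    rw [hμP, hPmap]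
    exact (integral_map measurable_fst.aemeasurable
      (f := fun x : ℝ => x) measurable_id.aestronglyMeasurable).symm
  have hEY : ∫ p : ℝ × ℝ, p.2 ∂π = μQ := by
    rw [hμQ, hQmap]
    exact (integral_map measurable_snd.aemeasurable
      (f := fun x : ℝ => x) measurable_id.aestronglyMeasurable).symm
  have hEa : ∫ p : ℝ × ℝ, (p.1 - μP) ∂π = 0 := by
    have h : ∫ p : ℝ × ℝ, (p.1 - μP) ∂π = (∫ p : ℝ × ℝ, p.1 ∂π) - ∫ _ : ℝ × ℝ, μP ∂π :=
      integral_sub hX1 (integrable_const μP)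
    rw [h, hEX, integral_const]; simp
  have hEb : ∫ p : ℝ × ℝ, (p.2 - μQ) ∂π = 0 := by
    have h : ∫ p : ℝ × ℝ, (p.2 - μQ) ∂π = (∫ p : ℝ × ℝ, p.2 ∂π) - ∫ _ : ℝ × ℝ, μQ ∂π :=
      integral_sub hY1 (integrable_const μQ)
    rw [h, hEY, integral_const]; simp
  set J := ∫ p : ℝ × ℝ, (p.1 - μP) * (p.2 - μQ) ∂π with hJ
  -- Cauchy–Schwarz
  have hCS : J ≤ σP * σQ := by
    rcases eq_or_lt_of_le hσP with h0 | hσP'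
    · have hz := integral_mul_eq_zero_of_sq (fun p : ℝ × ℝ => p.1 - μP)
        (fun p : ℝ × ℝ => p.2 - μQ) ha2 (by rw [hEa2, ← h0]; ring)
      rw [hJ, hz, ← h0]; nlinarith
    rcases eq_or_lt_of_le hσQ with h0 | hσQ'
    · have hsymm : J = ∫ p : ℝ × ℝ, (p.2 - μQ) * (p.1 - μP) ∂π := by
        rw [hJ]; apply integral_congr_ae; filter_upwards with p; ring
      have hz := integral_mul_eq_zero_of_sq (fun p : ℝ × ℝ => p.2 - μQ)
        (fun p : ℝ × ℝ => p.1 - μP) hb2 (by rw [hEb2, ← h0]; ring)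
      rw [hsymm, hz, ← h0]; nlinarith
    have hsq : 0 ≤ ∫ p : ℝ × ℝ, (σQ * (p.1 - μP) - σP * (p.2 - μQ)) ^ 2 ∂π :=
      integral_nonneg fun p => sq_nonneg _
    have e1 : ∫ p : ℝ × ℝ, (σQ * (p.1 - μP) - σP * (p.2 - μQ)) ^ 2 ∂π
        = ∫ p : ℝ × ℝ, ((σQ ^ 2 * (p.1 - μP) ^ 2 + σP ^ 2 * (p.2 - μQ) ^ 2)
            - (2 * σQ * σP) * ((p.1 - μP) * (p.2 - μQ))) ∂π :=
      integral_congr_ae (ae_of_all _ fun p => by ring)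
    have e2 : ∫ p : ℝ × ℝ, ((σQ ^ 2 * (p.1 - μP) ^ 2 + σP ^ 2 * (p.2 - μQ) ^ 2)
            - (2 * σQ * σP) * ((p.1 - μP) * (p.2 - μQ))) ∂π
        = (∫ p : ℝ × ℝ, (σQ ^ 2 * (p.1 - μP) ^ 2 + σP ^ 2 * (p.2 - μQ) ^ 2) ∂π)
            - ∫ p : ℝ × ℝ, (2 * σQ * σP) * ((p.1 - μP) * (p.2 - μQ)) ∂π :=
      integral_sub ((ha2.const_mul _).add (hb2.const_mul _)) (hab.const_mul _)
    have e3 : ∫ p : ℝ × ℝ, (σQ ^ 2 * (p.1 - μP) ^ 2 + σP ^ 2 * (p.2 - μQ) ^ 2) ∂π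
        = (∫ p : ℝ × ℝ, σQ ^ 2 * (p.1 - μP) ^ 2 ∂π)
            + ∫ p : ℝ × ℝ, σP ^ 2 * (p.2 - μQ) ^ 2 ∂π :=
      integral_add (ha2.const_mul _) (hb2.const_mul _)
    rw [e1, e2, e3, integral_const_mul _ _, integral_const_mul _ _, integral_const_mul _ _,
      hEa2, hEb2, ← hJ] at hsq
    nlinarith [mul_pos hσP' hσQ']
  -- main expansion
  have hintf : Integrable (fun p : ℝ × ℝ => (p.1 - p.2) ^ 2) π := by
    refine ⟨((measurable_fst.sub measurable_snd).pow_const 2).aestronglyMeasurable, ?_⟩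
    rw [hasFiniteIntegral_iff_norm]
    have h : ∫⁻ p, ENNReal.ofReal ‖(p.1 - p.2) ^ 2‖ ∂π
        = ∫⁻ p, ENNReal.ofReal ((p.1 - p.2) ^ 2) ∂π :=
      lintegral_congr fun p => by rw [Real.norm_of_nonneg (sq_nonneg _)]
    rw [h]
    exact lt_top_iff_ne_top.2 htop
  have hEf : ∫ p : ℝ × ℝ, (p.1 - p.2) ^ 2 ∂π
      = σP ^ 2 + σQ ^ 2 + (μP - μQ) ^ 2 - 2 * J := by
    have e1 : ∫ p : ℝ × ℝ, (p.1 - p.2) ^ 2 ∂π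
        = ∫ p : ℝ × ℝ, (((p.1 - μP) ^ 2 + (p.2 - μQ) ^ 2
            + ((μP - μQ) ^ 2 + (2 * (μP - μQ)) * (p.1 - μP)
              - (2 * (μP - μQ)) * (p.2 - μQ)))
            - 2 * ((p.1 - μP) * (p.2 - μQ))) ∂π :=
      integral_congr_ae (ae_of_all _ fun p => by ring)
    have i1 : Integrable (fun p : ℝ × ℝ => (μP - μQ) ^ 2
        + (2 * (μP - μQ)) * (p.1 - μP) - (2 * (μP - μQ)) * (p.2 - μQ)) π :=
      ((integrable_const _).add (ha1.const_mul _)).sub (hb1.const_mul _)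
    have i2 : Integrable (fun p : ℝ × ℝ => (p.1 - μP) ^ 2 + (p.2 - μQ) ^ 2
        + ((μP - μQ) ^ 2 + (2 * (μP - μQ)) * (p.1 - μP)
          - (2 * (μP - μQ)) * (p.2 - μQ))) π :=
      (ha2.add hb2).add i1
    have e2 : ∫ p : ℝ × ℝ, (((p.1 - μP) ^ 2 + (p.2 - μQ) ^ 2
            + ((μP - μQ) ^ 2 + (2 * (μP - μQ)) * (p.1 - μP)
              - (2 * (μP - μQ)) * (p.2 - μQ)))
            - 2 * ((p.1 - μP) * (p.2 - μQ))) ∂π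
        = (∫ p : ℝ × ℝ, ((p.1 - μP) ^ 2 + (p.2 - μQ) ^ 2
            + ((μP - μQ) ^ 2 + (2 * (μP - μQ)) * (p.1 - μP)
              - (2 * (μP - μQ)) * (p.2 - μQ))) ∂π)
          - ∫ p : ℝ × ℝ, 2 * ((p.1 - μP) * (p.2 - μQ)) ∂π :=
      integral_sub i2 (hab.const_mul _)
    have e3 : ∫ p : ℝ × ℝ, ((p.1 - μP) ^ 2 + (p.2 - μQ) ^ 2
            + ((μP - μQ) ^ 2 + (2 * (μP - μQ)) * (p.1 - μP)
              - (2 * (μP - μQ)) * (p.2 - μQ))) ∂π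
        = (∫ p : ℝ × ℝ, ((p.1 - μP) ^ 2 + (p.2 - μQ) ^ 2) ∂π)
          + ∫ p : ℝ × ℝ, ((μP - μQ) ^ 2 + (2 * (μP - μQ)) * (p.1 - μP)
              - (2 * (μP - μQ)) * (p.2 - μQ)) ∂π :=
      integral_add (ha2.add hb2) i1
    have e4 : ∫ p : ℝ × ℝ, ((p.1 - μP) ^ 2 + (p.2 - μQ) ^ 2) ∂π
        = (∫ p : ℝ × ℝ, (p.1 - μP) ^ 2 ∂π) + ∫ p : ℝ × ℝ, (p.2 - μQ) ^ 2 ∂π :=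
      integral_add ha2 hb2
    have e5 : ∫ p : ℝ × ℝ, ((μP - μQ) ^ 2 + (2 * (μP - μQ)) * (p.1 - μP)
              - (2 * (μP - μQ)) * (p.2 - μQ)) ∂π
        = ((∫ _ : ℝ × ℝ, (μP - μQ) ^ 2 ∂π)
            + ∫ p : ℝ × ℝ, (2 * (μP - μQ)) * (p.1 - μP) ∂π)
          - ∫ p : ℝ × ℝ, (2 * (μP - μQ)) * (p.2 - μQ) ∂π := by
      have s1 : ∫ p : ℝ × ℝ, ((μP - μQ) ^ 2 + (2 * (μP - μQ)) * (p.1 - μP)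
              - (2 * (μP - μQ)) * (p.2 - μQ)) ∂π
          = (∫ p : ℝ × ℝ, ((μP - μQ) ^ 2 + (2 * (μP - μQ)) * (p.1 - μP)) ∂π)
            - ∫ p : ℝ × ℝ, (2 * (μP - μQ)) * (p.2 - μQ) ∂π :=
        integral_sub ((integrable_const _).add (ha1.const_mul _)) (hb1.const_mul _)
      have s2 : ∫ p : ℝ × ℝ, ((μP - μQ) ^ 2 + (2 * (μP - μQ)) * (p.1 - μP)) ∂π
          = (∫ _ : ℝ × ℝ, (μP - μQ) ^ 2 ∂π)
            + ∫ p : ℝ × ℝ, (2 * (μP - μQ)) * (p.1 - μP) ∂π :=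
        integral_add (integrable_const _) (ha1.const_mul _)
      rw [s1, s2]
    rw [e1, e2, e3, e4, e5, integral_const_mul _ _, integral_const_mul _ _, integral_const_mul _ _,
      hEa2, hEb2, hEa, hEb, integral_const, ← hJ]
    simp
  -- conclude
  rw [← ofReal_integral_eq_lintegral_ofReal hintf (ae_of_all _ fun p => sq_nonneg _)]
  apply ENNReal.ofReal_le_ofReal
  rw [hEf]
  nlinarith
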